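/- Let A be a subset of the real line and let δ > 0. Then the infimum of Σ_i diam(U_i) over all at most countable covers {U_i} of A by sets of diameter at most δ equals the infimum of Σ_i diam(V_i) over all at most countable left-right ordered partitions {V_i} of A into sets of diameter at most δ (both infima taken in the extended nonnegative reals). -/

import Mathlib

open MeasureTheory Set

/-- An (at most countable) indexed family `V` is a left-right ordered partition of `A ⊆ ℝ`
if its members are pairwise disjoint, their union is `A`, and any two distinct members are
comparable: one lies entirely to the left of the other. -/
def LROrderedPartition {ι : Type*} (V : ι → Set ℝ) (A : Set ℝ) : Prop :=
  (⋃ i, V i) = A ∧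
  Pairwise (Function.onFun Disjoint V) ∧
  ∀ i j, i ≠ j →
    (∀ x ∈ V i, ∀ y ∈ V j, x ≤ y) ∨ (∀ x ∈ V i, ∀ y ∈ V j, y ≤ x)

lemma diam_le_volume_of_ordConnected {X : Set ℝ} (hX : X.OrdConnected) :
    EMetric.diam X ≤ volume X := by
  refine EMetric.diam_le fun x hx y hy => ?_
  have key : ∀ a b : ℝ, a ∈ X → b ∈ X → a ≤ b → edist a b ≤ volume X := by
    intro a b ha hb hab
    have hsub : Set.Ioo a b ⊆ X := fun z hz => hX.out ha hb ⟨hz.1.le, hz.2.le⟩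
    calc edist a b = ENNReal.ofReal (b - a) := by
          rw [edist_dist, Real.dist_eq, abs_of_nonpos (by linarith), neg_sub]
      _ = volume (Set.Ioo a b) := Real.volume_Ioo.symm
      _ ≤ volume X := measure_mono hsub
  rcases le_total x y with h | h
  · exact key x y hx hy h
  · rw [edist_comm]; exact key y x hy hx h

lemma lr_of_disjoint_ordConnected {X Y : Set ℝ} (hXY : Disjoint X Y)
    (hX : X.OrdConnected) (hY : Y.OrdConnected) :
    (∀ x ∈ X, ∀ y ∈ Y, x ≤ y) ∨ (∀ x ∈ X, ∀ y ∈ Y, y ≤ x) := by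
  by_contra h
  push_neg at h
  obtain ⟨⟨x, hx, y, hy, hyx⟩, ⟨x', hx', y', hy', hxy'⟩⟩ := h
  rcases le_or_gt y' x with h1 | h1
  · have : y' ∈ X := hX.out hx' hx ⟨hxy'.le, h1⟩
    exact Set.disjoint_left.mp hXY this hy'
  · have : x ∈ Y := hY.out hy hy' ⟨hyx.le, h1.le⟩
    exact Set.disjoint_left.mp hXY hx this

lemma exists_lr_partition (A : Set ℝ) {δ : ℝ} (hδ : 0 < δ) (U : ℕ → Set ℝ)
    (hU : A ⊆ ⋃ i, U i) :
    ∃ V : ℕ → Set ℝ, LROrderedPartition V A ∧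
      (∀ i, EMetric.diam (V i) ≤ ENNReal.ofReal δ) ∧
      ∑' i, EMetric.diam (V i) ≤ ∑' i, EMetric.diam (U i) := by
  classical
  -- interval hulls
  set I : ℕ → Set ℝ := fun i =>
    if (U i).Nonempty then
      if Bornology.IsBounded (U i) then Icc (sInf (U i)) (sSup (U i)) else univ
    else ∅ with hI
  have hUI : ∀ i, U i ⊆ I i := by
    intro i x hx
    simp only [hI]
    rw [if_pos ⟨x, hx⟩]
    split_ifs with hb
    · exact ⟨csInf_le hb.bddBelow hx, le_csSup hb.bddAbove hx⟩
    · trivial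
  have hIoc : ∀ i, (I i).OrdConnected := by
    intro i; simp only [hI]; split_ifs
    exacts [ordConnected_Icc, ordConnected_univ, ordConnected_empty]
  have hIvol : ∀ i, volume (I i) ≤ EMetric.diam (U i) := by
    intro i; simp only [hI]; split_ifs with hne hb
    · show _ ≤ Metric.ediam (U i); rw [Real.volume_Icc, Real.ediam_eq hb]
    · have : EMetric.diam (U i) = ⊤ := by
        by_contra h
        exact hb (Metric.isBounded_iff_ediam_ne_top.2 h)
      rw [this]; exact le_top
    · simp
  have hInonempty : ∀ i, (I i).Nonempty → (U i).Nonempty := by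
    intro i h
    by_contra hne
    rw [hI] at h
    simp only [if_neg hne] at h
    exact not_nonempty_empty h
  set S := ⋃ i, I i with hS
  have hAS : A ⊆ S := hU.trans (iUnion_mono hUI)
  -- base points and components
  set pt : ℕ → ℝ := fun i => if h : (U i).Nonempty then h.choose else 0 with hptdef
  have hpt : ∀ i, (h : (U i).Nonempty) → pt i ∈ U i := by
    intro i h; simp only [hptdef, dif_pos h]; exact h.choose_spec
  set C : ℕ → Set ℝ := fun i =>
    if h : (U i).Nonempty then connectedComponentIn S (pt i) else ∅ with hCdef
  have hIC : ∀ i, I i ⊆ C i := by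
    intro i
    by_cases h : (U i).Nonempty
    · simp only [hCdef, dif_pos h]
      exact ((hIoc i).isPreconnected).subset_connectedComponentIn
        (hUI i (hpt i h)) (subset_iUnion I i)
    · have : I i = ∅ := by simp [hI, if_neg h]
      rw [this]; exact empty_subset _
  have hCoc : ∀ i, (C i).OrdConnected := by
    intro i; simp only [hCdef]; split_ifs
    · exact isPreconnected_connectedComponentIn.ordConnected
    · exact ordConnected_empty
  have hCeqd : ∀ i j, C i = C j ∨ Disjoint (C i) (C j) := by
    intro i j
    by_cases hd : Disjoint (C i) (C j)
    · exact Or.inr hd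
    · left
      obtain ⟨z, hzi, hzj⟩ := Set.not_disjoint_iff.1 hd
      by_cases hi : (U i).Nonempty
      · by_cases hj : (U j).Nonempty
        · simp only [hCdef, dif_pos hi, dif_pos hj] at *
          rw [connectedComponentIn_eq hzi, connectedComponentIn_eq hzj]
        · exfalso; simp only [hCdef, dif_neg hj] at hzj; exact hzj
      · exfalso; simp only [hCdef, dif_neg hi] at hzi; exact hzi
  have hSC : S ⊆ ⋃ i, C i := by
    intro x hx
    obtain ⟨i, hxi⟩ := mem_iUnion.1 hx
    exact mem_iUnion.2 ⟨i, hIC i hxi⟩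
  -- disjointification
  set D : ℕ → Set ℝ := fun i => C i \ ⋃ j, ⋃ (_ : j < i), C j with hDdef
  have hDC : ∀ i, D i ⊆ C i := fun i => diff_subset
  have hDlt : ∀ i j, i < j → Disjoint (D i) (D j) := by
    intro i j hij
    rw [Set.disjoint_left]
    intro x hxi hxj
    exact hxj.2 (mem_iUnion₂.2 ⟨i, hij, hDC i hxi⟩)
  have hDdisj : Pairwise (Function.onFun Disjoint D) := by
    intro i j hne
    rcases hne.lt_or_gt with h | h
    · exact hDlt i j h
    · exact (hDlt j i h).symm
  have hDeq : ∀ i, D i = C i ∨ D i = ∅ := by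
    intro i
    by_cases h : ∃ j, j < i ∧ C j = C i
    · right
      obtain ⟨j, hj, hCji⟩ := h
      refine eq_empty_iff_forall_notMem.2 fun x hx => hx.2 (mem_iUnion₂.2 ⟨j, hj, ?_⟩)
      rw [hCji]; exact hx.1
    · left
      push_neg at h
      refine subset_antisymm (hDC i) fun x hx => ⟨hx, fun hmem => ?_⟩
      obtain ⟨j, hj, hxj⟩ := mem_iUnion₂.1 hmem
      rcases hCeqd j i with heq | hdis
      · exact (h j hj) heq
      · exact (Set.disjoint_left.mp hdis hxj) hx
  have hDoc : ∀ i, (D i).OrdConnected := by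
    intro i
    rcases hDeq i with h | h <;> rw [h]
    · exact hCoc i
    · exact ordConnected_empty
  have hSD : S ⊆ ⋃ i, D i := by
    intro x hx
    have hxc : ∃ i, x ∈ C i := mem_iUnion.1 (hSC hx)
    refine mem_iUnion.2 ⟨Nat.find hxc, Nat.find_spec hxc, ?_⟩
    intro hmem
    obtain ⟨j, hj, hxj⟩ := mem_iUnion₂.1 hmem
    exact Nat.find_min hxc hj hxj
  -- slabs
  set T : ℤ → Set ℝ := fun k => Ico ((k : ℝ) * δ) (((k : ℝ) + 1) * δ) with hTdef
  have hTunion : (⋃ k, T k) = univ := by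
    ext x
    simp only [hTdef, mem_iUnion, mem_univ, iff_true, mem_Ico]
    refine ⟨⌊x / δ⌋, ?_, ?_⟩
    · calc (⌊x / δ⌋ : ℝ) * δ ≤ (x / δ) * δ :=
            mul_le_mul_of_nonneg_right (Int.floor_le _) hδ.le
        _ = x := div_mul_cancel₀ x hδ.ne'
    · calc x = (x / δ) * δ := (div_mul_cancel₀ x hδ.ne').symm
        _ < ((⌊x / δ⌋ : ℝ) + 1) * δ :=
            mul_lt_mul_of_pos_right (Int.lt_floor_add_one _) hδ
  have hTlt : ∀ k l : ℤ, k < l → Disjoint (T k) (T l) := by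
    intro k l hkl
    rw [Set.disjoint_left]
    rintro x ⟨_, hx2⟩ ⟨hx3, _⟩
    have h1 : ((k : ℝ) + 1) ≤ (l : ℝ) := by exact_mod_cast hkl
    have : ((k : ℝ) + 1) * δ ≤ (l : ℝ) * δ := mul_le_mul_of_nonneg_right h1 hδ.le
    linarith
  have hTdisj : Pairwise (Function.onFun Disjoint T) := by
    intro k l hne
    rcases hne.lt_or_gt with h | h
    · exact hTlt k l h
    · exact (hTlt l k h).symm
  have hTmeas : ∀ k, MeasurableSet (T k) := fun k => measurableSet_Ico
  -- the pieces
  set P : ℕ × ℤ → Set ℝ := fun p => (A ∩ D p.1) ∩ T p.2 with hPdef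
  set e : ℕ ≃ ℕ × ℤ := (Denumerable.eqv (ℕ × ℤ)).symm with hedef
  refine ⟨fun n => P (e n), ⟨?_, ?_, ?_⟩, ?_, ?_⟩
  · -- union = A
    have h1 : (⋃ n, P (e n)) = ⋃ p, P p := e.surjective.iUnion_comp P
    rw [h1]
    apply subset_antisymm
    · exact iUnion_subset fun p => (inter_subset_left).trans inter_subset_left
    · intro x hx
      obtain ⟨i, hxi⟩ := mem_iUnion.1 (hSD (hAS hx))
      have : x ∈ ⋃ k, T k := hTunion ▸ mem_univ x
      obtain ⟨k, hxk⟩ := mem_iUnion.1 this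
      exact mem_iUnion.2 ⟨(i, k), ⟨⟨hx, hxi⟩, hxk⟩⟩
  · -- pairwise disjoint
    have hP : Pairwise (Function.onFun Disjoint P) := by
      rintro ⟨i, k⟩ ⟨j, l⟩ hne
      by_cases hij : i = j
      · have hkl : k ≠ l := by
          intro h; exact hne (by rw [hij, h])
        exact Disjoint.mono (inter_subset_right) (inter_subset_right) (hTdisj hkl)
      · exact Disjoint.mono ((inter_subset_left).trans inter_subset_right)
          ((inter_subset_left).trans inter_subset_right) (hDdisj hij)
    exact fun m n hmn => hP (fun h => hmn (e.injective h))
  · -- LR ordered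
    intro m n hmn
    have hpq : e m ≠ e n := fun h => hmn (e.injective h)
    set p := e m
    set q := e n
    by_cases h1 : p.1 = q.1
    · have h2 : p.2 ≠ q.2 := by
        intro h; exact hpq (Prod.ext h1 h)
      have key : ∀ k l : ℤ, k < l → ∀ x ∈ T k, ∀ y ∈ T l, x ≤ y := by
        intro k l hkl x hx y hy
        have h1' : ((k : ℝ) + 1) ≤ (l : ℝ) := by exact_mod_cast hkl
        have : ((k : ℝ) + 1) * δ ≤ (l : ℝ) * δ := mul_le_mul_of_nonneg_right h1' hδ.le
        have hx2 := hx.2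
        have hy1 := hy.1
        linarith
      rcases h2.lt_or_gt with h | h
      · exact Or.inl fun x hx y hy => key _ _ h x hx.2 y hy.2
      · exact Or.inr fun x hx y hy => key _ _ h y hy.2 x hx.2
    · rcases lr_of_disjoint_ordConnected (hDdisj h1) (hDoc p.1) (hDoc q.1) with h | h
      · exact Or.inl fun x hx y hy => h x hx.1.2 y hy.1.2
      · exact Or.inr fun x hx y hy => h x hx.1.2 y hy.1.2
  · -- diameter bound
    intro n
    calc EMetric.diam (P (e n)) ≤ EMetric.diam (T (e n).2) :=
          EMetric.diam_mono inter_subset_right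
      _ = ENNReal.ofReal δ := by
          rw [hTdef]; show Metric.ediam _ = _; rw [Real.ediam_Ico]; ring_nf
  · -- the sum estimate
    have step1 : ∑' n, EMetric.diam (P (e n)) = ∑' p, EMetric.diam (P p) :=
      e.tsum_eq fun p => EMetric.diam (P p)
    have step2 : ∑' p : ℕ × ℤ, EMetric.diam (P p) =
        ∑' i, ∑' k, EMetric.diam (P (i, k)) :=
      ENNReal.tsum_prod (f := fun i k => EMetric.diam (P (i, k)))
    have step3 : ∀ i k, EMetric.diam (P (i, k)) ≤ volume (D i ∩ T k) := by
      intro i k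
      calc EMetric.diam (P (i, k)) ≤ EMetric.diam (D i ∩ T k) :=
            EMetric.diam_mono (by
              rintro x ⟨⟨_, hxD⟩, hxT⟩; exact ⟨hxD, hxT⟩)
        _ ≤ volume (D i ∩ T k) :=
            diam_le_volume_of_ordConnected ((hDoc i).inter Set.ordConnected_Ico)
    have step4 : ∀ i, ∑' k, volume (D i ∩ T k) = volume (D i) := by
      intro i
      have h1 : ∀ k, volume (D i ∩ T k) = (volume.restrict (D i)) (T k) := by
        intro k
        rw [Measure.restrict_apply (hTmeas k), inter_comm]
      simp_rw [h1]
      rw [← measure_iUnion hTdisj hTmeas, hTunion, Measure.restrict_apply_univ]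
    have step5 : ∀ i, volume (D i) ≤ ∑' j, volume (D i ∩ I j) := by
      intro i
      have h1 : D i = ⋃ j, D i ∩ I j := by
        rw [← inter_iUnion, ← hS]
        exact (inter_eq_left.2 ((hDC i).trans (by
          rcases (em (U i).Nonempty) with h | h
          · simp only [hCdef, dif_pos h]; exact connectedComponentIn_subset S (pt i)
          · simp only [hCdef, dif_neg h]; exact empty_subset _))).symm
      calc volume (D i) = volume (⋃ j, D i ∩ I j) := by rw [← h1]
        _ ≤ ∑' j, volume (D i ∩ I j) := measure_iUnion_le _
    have step6 : ∀ j, ∑' i, volume (D i ∩ I j) ≤ volume (I j) := by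
      intro j
      by_cases hIj : (I j).Nonempty
      · have hex : ∃ i, C i = C j := ⟨j, rfl⟩
        rw [tsum_eq_single (Nat.find hex) ?_]
        · exact measure_mono inter_subset_right
        · intro i hi
          have hempty : D i ∩ I j = ∅ := by
            rcases hCeqd i j with hceq | hdisj
            · have hle : Nat.find hex ≤ i := Nat.find_min' hex hceq
              have hlt : Nat.find hex < i := lt_of_le_of_ne hle (Ne.symm hi)
              refine eq_empty_iff_forall_notMem.2 fun x hx => ?_
              have hxC : x ∈ C (Nat.find hex) := by
                rw [Nat.find_spec hex]
                exact hIC j hx.2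
              exact hx.1.2 (mem_iUnion₂.2 ⟨Nat.find hex, hlt, hxC⟩)
            · refine eq_empty_iff_forall_notMem.2 fun x hx => ?_
              exact Set.disjoint_left.mp hdisj (hDC i hx.1) (hIC j hx.2)
          rw [hempty]; simp
      · rw [not_nonempty_iff_eq_empty.1 hIj]
        simp
    calc ∑' n, EMetric.diam (P (e n)) = ∑' i, ∑' k, EMetric.diam (P (i, k)) := by
          rw [step1, step2]
      _ ≤ ∑' i, ∑' k, volume (D i ∩ T k) :=
          ENNReal.tsum_le_tsum fun i => ENNReal.tsum_le_tsum fun k => step3 i k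
      _ = ∑' i, volume (D i) := by simp_rw [step4]
      _ ≤ ∑' i, ∑' j, volume (D i ∩ I j) := ENNReal.tsum_le_tsum step5
      _ = ∑' j, ∑' i, volume (D i ∩ I j) := ENNReal.tsum_comm
      _ ≤ ∑' j, volume (I j) := ENNReal.tsum_le_tsum step6
      _ ≤ ∑' j, EMetric.diam (U j) := ENNReal.tsum_le_tsum hIvol

/-- For `A ⊆ ℝ` and `δ > 0`, the infimum of `Σᵢ diam Uᵢ` over all at most countable covers of
`A` by sets of diameter at most `δ` (the quantity `H¹_δ(A)`) equals the corresponding infimum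
taken only over at most countable left-right ordered partitions of `A` into sets of diameter
at most `δ`. -/
theorem stmt_13 (A : Set ℝ) (δ : ℝ) (hδ : 0 < δ) :
    (⨅ (U : ℕ → Set ℝ) (_ : A ⊆ ⋃ i, U i)
        (_ : ∀ i, EMetric.diam (U i) ≤ ENNReal.ofReal δ),
      ∑' i, EMetric.diam (U i)) =
    ⨅ (V : ℕ → Set ℝ) (_ : LROrderedPartition V A)
        (_ : ∀ i, EMetric.diam (V i) ≤ ENNReal.ofReal δ),
      ∑' i, EMetric.diam (V i) := by
  apply le_antisymm
  · refine le_iInf fun V => le_iInf fun hV => le_iInf fun hd => ?_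
    exact iInf_le_of_le V (iInf_le_of_le hV.1.symm.subset (iInf_le_of_le hd le_rfl))
  · refine le_iInf fun U => le_iInf fun hU => le_iInf fun _ => ?_
    obtain ⟨V, hV, hVd, hVsum⟩ := exists_lr_partition A hδ U hU
    exact le_trans (iInf_le_of_le V (iInf_le_of_le hV (iInf_le_of_le hVd le_rfl))) hVsum
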